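/- Let G be a k-chordal simple graph (k ≥ 3), let n ≥ k + 1, and let x₁, x₂, …, x_n be pairwise distinct vertices forming a cycle in G (x_i adjacent to x_{i+1} for 1 ≤ i < n, and x_n adjacent to x₁). Suppose no chord of this cycle has an endpoint in {x₂, …, x_{k−1}}: whenever x_i and x_j are adjacent in G but are not cyclically consecutive in the cycle, neither i nor j lies in {2, …, k−1}. Then x₁ and x_k are adjacent in G. -/

import Mathlib

/-- A graph is `k`-chordal if it has no induced cycle of length greater than `k`. -/
def IsKChordal {V : Type*} (G : SimpleGraph V) (k : ℕ) : Prop :=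
  ∀ m : ℕ, 3 ≤ m → k < m → IsEmpty (SimpleGraph.cycleGraph m ↪g G)

private lemma add_one_val : ∀ {n : ℕ} [NeZero n] (a : Fin n),
    ((a + 1 : Fin n)).val = if a.val + 1 = n then 0 else a.val + 1
  | n+1, _, a => by
    rw [Fin.val_add_one]
    by_cases h : a = Fin.last n
    · rw [if_pos h, if_pos (by simp [h, Fin.last])]
    · rw [if_neg h, if_neg (by simpa [Fin.ext_iff, Fin.last] using h)]

private lemma aux_chordal {V : Type*} (G : SimpleGraph V) (k : ℕ) (hk : 3 ≤ k)
    (hchord : IsKChordal G k) (n : ℕ) :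
    ∀ [NeZero n], k + 1 ≤ n → ∀ x : Fin n → V, Function.Injective x →
      (∀ i : Fin n, G.Adj (x i) (x (i + 1))) →
      (∀ i j : Fin n, G.Adj (x i) (x j) → j ≠ i + 1 → i ≠ j + 1 →
        ¬ (1 ≤ (i : ℕ) ∧ (i : ℕ) ≤ k - 2)) →
      ∀ hkn : k - 1 < n, G.Adj (x 0) (x ⟨k - 1, hkn⟩) := by
  induction n using Nat.strong_induction_on with
  | _ n IH =>
  intro inst hn x hinj hcyc hnochord hkn
  have hn4 : 4 ≤ n := by omega
  have hadd : ∀ a : Fin n, ((a + 1 : Fin n)).val = if a.val + 1 = n then 0 else a.val + 1 :=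
    fun a => add_one_val a
  have hadd' : ∀ (v : ℕ) (h : v < n),
      (((⟨v, h⟩ : Fin n) + 1)).val = if v + 1 = n then 0 else v + 1 :=
    fun v h => add_one_val ⟨v, h⟩
  have h0 : ((0 : Fin n)).val = 0 := Fin.val_zero n
  by_cases hex : ∃ i j : Fin n, G.Adj (x i) (x j) ∧ j ≠ i + 1 ∧ i ≠ j + 1
  case neg =>
    exfalso
    push_neg at hex
    obtain ⟨p, rfl⟩ : ∃ p, n = p + 2 := ⟨n - 2, by omega⟩
    refine (hchord (p + 2) (by omega) (by omega)).false ⟨⟨x, hinj⟩, ?_⟩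
    intro a b
    simp only [Function.Embedding.coeFn_mk]
    constructor
    · intro hab
      rw [SimpleGraph.cycleGraph_adj]
      by_cases h1 : b = a + 1
      · right; rw [h1]; abel
      · left
        have h2 := hex a b hab h1
        rw [h2]; abel
    · intro hab
      rw [SimpleGraph.cycleGraph_adj] at hab
      rcases hab with h | h
      · have h2 : a = b + 1 := by rw [sub_eq_iff_eq_add] at h; rw [h]; abel
        rw [h2]; exact (hcyc b).symm
      · have h2 : b = a + 1 := by rw [sub_eq_iff_eq_add] at h; rw [h]; abel
        rw [h2]; exact hcyc a
  case pos =>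
  obtain ⟨i0, j0, hij0, h10, h20⟩ := hex
  have main : ∀ a b : Fin n, G.Adj (x a) (x b) → b ≠ a + 1 → a ≠ b + 1 → (a : ℕ) < (b : ℕ) →
      G.Adj (x 0) (x ⟨k - 1, hkn⟩) := by
    intro a b hab hba1 hab1 hlt
    have hA := hnochord a b hab hba1 hab1
    have hB := hnochord b a hab.symm hab1 hba1
    have hbn : (b : ℕ) < n := b.isLt
    have han : (a : ℕ) < n := a.isLt
    have hb2 : (a : ℕ) + 2 ≤ (b : ℕ) := by
      by_contra h
      exact hba1 (Fin.ext (by rw [hadd, if_neg (by omega)]; omega))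
    have hbk : k - 1 ≤ (b : ℕ) := by omega
    rcases (show (a : ℕ) = 0 ∨ k - 1 ≤ (a : ℕ) by omega) with ha0 | hak
    · -- chord from x 0
      have hbn1 : (b : ℕ) ≠ n - 1 := by
        intro h
        exact hab1 (Fin.ext (by rw [hadd, if_pos (by omega)]; omega))
      by_cases hbK : (b : ℕ) = k - 1
      · have ea : a = 0 := Fin.ext (by rw [h0]; omega)
        have eb : b = ⟨k - 1, hkn⟩ := Fin.ext hbK
        rw [← ea, ← eb]; exact hab
      · -- shrink to the cycle x 0, x 1, ..., x b
        set m := (b : ℕ) + 1 with hmdef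
        have hmn : m < n := by omega
        have hmk : k + 1 ≤ m := by omega
        haveI : NeZero m := ⟨by omega⟩
        have haddm : ∀ t : Fin m,
            ((t + 1 : Fin m)).val = if (t : ℕ) + 1 = m then 0 else (t : ℕ) + 1 :=
          fun t => add_one_val t
        have h0m : ((0 : Fin m)).val = 0 := Fin.val_zero m
        set y : Fin m → V := fun t => x ⟨(t : ℕ), Nat.lt_trans t.isLt hmn⟩ with hy
        have hyinj : Function.Injective y := by
          intro s t h
          simp only [hy] at h
          have h2 := congrArg Fin.val (hinj h)
          exact Fin.ext h2
        have hycyc : ∀ t : Fin m, G.Adj (y t) (y (t + 1)) := by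
          intro t
          have htm := t.isLt
          simp only [hy]
          by_cases htop : (t : ℕ) + 1 = m
          · convert hab.symm using 3
            · omega
            · rw [haddm, if_pos htop]
              omega
          · convert hcyc ⟨(t : ℕ), Nat.lt_trans htm hmn⟩ using 3
            rw [haddm, if_neg htop, hadd', if_neg (by omega)]
        have hychord : ∀ s t : Fin m, G.Adj (y s) (y t) → t ≠ s + 1 → s ≠ t + 1 →
            ¬ (1 ≤ (s : ℕ) ∧ (s : ℕ) ≤ k - 2) := by
          intro s t hst hts1 hst1 hand
          obtain ⟨hs1, hs2⟩ := hand
          have hsm := s.isLt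
          have htm := t.isLt
          simp only [hy] at hst
          refine hnochord ⟨(s : ℕ), by omega⟩ ⟨(t : ℕ), by omega⟩ hst ?_ ?_ ⟨hs1, hs2⟩
          · intro h
            have hval := congrArg Fin.val h
            rw [hadd', if_neg (by omega)] at hval
            have hval2 : (t : ℕ) = (s : ℕ) + 1 := hval
            apply hts1
            apply Fin.ext
            rw [haddm, if_neg (by omega)]
            omega
          · intro h
            have hval := congrArg Fin.val h
            rw [hadd', if_neg (by omega)] at hval
            have hval2 : (s : ℕ) = (t : ℕ) + 1 := hval
            apply hst1
            apply Fin.ext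
            rw [haddm, if_neg (by omega)]
            omega
        have key := IH m hmn hmk y hyinj hycyc hychord (by omega)
        simp only [hy] at key
        convert key using 3
        rw [h0, h0m]
    · -- chord with k - 1 ≤ a < b : cut out the open arc between a and b
      set d := (b : ℕ) - (a : ℕ) - 1 with hddef
      set m := n - d with hmdef
      have hd1 : 1 ≤ d := by omega
      have hmn : m < n := by omega
      have hmk : k + 1 ≤ m := by omega
      have ham : (a : ℕ) + 2 ≤ m := by omega
      haveI : NeZero m := ⟨by omega⟩
      have haddm : ∀ t : Fin m,
          ((t + 1 : Fin m)).val = if (t : ℕ) + 1 = m then 0 else (t : ℕ) + 1 :=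
        fun t => add_one_val t
      have h0m : ((0 : Fin m)).val = 0 := Fin.val_zero m
      set φv : ℕ → ℕ := fun v => if v ≤ (a : ℕ) then v else v + d with hφv
      have hφa : ∀ v, v ≤ (a : ℕ) → φv v = v := by
        intro v hv; simp only [hφv]; rw [if_pos hv]
      have hφb : ∀ v, (a : ℕ) < v → φv v = v + d := by
        intro v hv; simp only [hφv]; rw [if_neg (by omega)]
      have hφlt : ∀ v, v < m → φv v < n := by
        intro v hv; simp only [hφv]; split_ifs <;> omega
      have hφinj : ∀ u v, u < m → v < m → φv u = φv v → u = v := by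
        intro u v hu hv h; simp only [hφv] at h; split_ifs at h <;> omega
      set y : Fin m → V := fun t => x ⟨φv (t : ℕ), hφlt _ t.isLt⟩ with hy
      have hyinj : Function.Injective y := by
        intro s t h
        simp only [hy] at h
        have h2 := congrArg Fin.val (hinj h)
        exact Fin.ext (hφinj _ _ s.isLt t.isLt h2)
      have hycyc : ∀ t : Fin m, G.Adj (y t) (y (t + 1)) := by
        intro t
        have htm := t.isLt
        simp only [hy]
        by_cases htop : (t : ℕ) + 1 = m
        · convert hcyc ⟨n - 1, by omega⟩ using 3
          · rw [hφb (t : ℕ) (by omega)]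
            omega
          · rw [haddm, if_pos htop, hφa 0 (Nat.zero_le _), hadd', if_pos (by omega)]
        · by_cases hta : (t : ℕ) = (a : ℕ)
          · convert hab using 3
            · rw [hta, hφa (a : ℕ) le_rfl]
            · rw [haddm, if_neg htop, hφb ((t : ℕ) + 1) (by omega)]
              omega
          · convert hcyc ⟨φv (t : ℕ), hφlt _ t.isLt⟩ using 3
            rw [haddm, if_neg htop, hadd']
            rcases Nat.lt_or_ge (t : ℕ) (a : ℕ) with hc | hc
            · rw [hφa ((t : ℕ) + 1) (by omega), hφa (t : ℕ) (by omega), if_neg (by omega)]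
            · rw [hφb ((t : ℕ) + 1) (by omega), hφb (t : ℕ) (by omega), if_neg (by omega)]
              omega
      have hychord : ∀ s t : Fin m, G.Adj (y s) (y t) → t ≠ s + 1 → s ≠ t + 1 →
          ¬ (1 ≤ (s : ℕ) ∧ (s : ℕ) ≤ k - 2) := by
        intro s t hst hts1 hst1 hand
        obtain ⟨hs1, hs2⟩ := hand
        have hsm := s.isLt
        have htm := t.isLt
        have hsa : (s : ℕ) < (a : ℕ) := by omega
        simp only [hy] at hst
        refine hnochord ⟨φv (s : ℕ), hφlt _ hsm⟩ ⟨φv (t : ℕ), hφlt _ htm⟩ hst ?_ ?_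
          (show 1 ≤ φv (s : ℕ) ∧ φv (s : ℕ) ≤ k - 2 by
            rw [hφa (s : ℕ) (by omega)]; exact ⟨hs1, hs2⟩)
        · intro h
          have hval := congrArg Fin.val h
          rw [hadd', if_neg (by rw [hφa (s : ℕ) (by omega)]; omega)] at hval
          have hval2 : φv (t : ℕ) = φv (s : ℕ) + 1 := hval
          rw [hφa (s : ℕ) (by omega)] at hval2
          rcases le_or_gt (t : ℕ) (a : ℕ) with hc | hc
          · rw [hφa (t : ℕ) hc] at hval2
            apply hts1
            apply Fin.ext
            rw [haddm, if_neg (by omega)]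
            omega
          · rw [hφb (t : ℕ) hc] at hval2
            omega
        · intro h
          have hval := congrArg Fin.val h
          rw [hadd'] at hval
          by_cases hc0 : φv (t : ℕ) + 1 = n
          · rw [if_pos hc0] at hval
            have hval2 : φv (s : ℕ) = 0 := hval
            rw [hφa (s : ℕ) (by omega)] at hval2
            omega
          · rw [if_neg hc0] at hval
            have hval2 : φv (s : ℕ) = φv (t : ℕ) + 1 := hval
            rw [hφa (s : ℕ) (by omega)] at hval2
            rcases le_or_gt (t : ℕ) (a : ℕ) with hc | hc
            · rw [hφa (t : ℕ) hc] at hval2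
              apply hst1
              apply Fin.ext
              rw [haddm, if_neg (by omega)]
              omega
            · rw [hφb (t : ℕ) hc] at hval2
              omega
      have key := IH m hmn hmk y hyinj hycyc hychord (by omega)
      simp only [hy] at key
      convert key using 3
      · rw [h0, h0m, hφa 0 (Nat.zero_le _)]
      · rw [hφa (k - 1) (by omega)]
  have hne : (i0 : ℕ) ≠ (j0 : ℕ) := fun h => hij0.ne (congrArg x (Fin.ext h))
  rcases hne.lt_or_gt with h | h
  · exact main i0 j0 hij0 h10 h20 h
  · exact main j0 i0 hij0.symm h20 h10 h

/-- Let `G` be `k`-chordal (`k ≥ 3`) and let `x 0, x 1, …, x (n-1)` (`n ≥ k + 1`) be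
pairwise distinct vertices forming a cycle (here `x i` represents the vertex
`x_{i+1}` of the 1-based statement, and indices are taken cyclically in `Fin n`).
If no chord of the cycle has an endpoint among `x 1, …, x (k-2)`
(1-based: `x₂, …, x_{k-1}`), then `x 0` and `x (k-1)` (1-based: `x₁` and `x_k`)
are adjacent. -/
theorem adj_of_no_chord_in_segment {V : Type*} (G : SimpleGraph V)
    (k : ℕ) (hk : 3 ≤ k) (hchord : IsKChordal G k)
    (n : ℕ) [NeZero n] (hn : k + 1 ≤ n) (x : Fin n → V)
    (hinj : Function.Injective x)
    (hcyc : ∀ i : Fin n, G.Adj (x i) (x (i + 1)))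
    (hnochord : ∀ i j : Fin n, G.Adj (x i) (x j) → j ≠ i + 1 → i ≠ j + 1 →
      ¬ (1 ≤ (i : ℕ) ∧ (i : ℕ) ≤ k - 2)) :
    G.Adj (x 0) (x ⟨k - 1, by omega⟩) := by
  exact aux_chordal G k hk hchord n hn x hinj hcyc hnochord (by omega)
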